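/- For odd n ≥ 3, Player 2 has a winning strategy for REL(Dic_n, {a,b,c}) with the presentation Dic_n = ⟨a,b,c | a^n = b^2 = c^2 = abc⟩. -/

import Mathlib

namespace RelatorGames

variable {G : Type*} [Group G]

/-- The letters available in the relator games: elements of `S` and their inverses. -/
def letters (S : Set G) : Set G := S ∪ (fun g => g⁻¹) '' S

/-- Evaluate a history of moves (most recent letter first) to a group element:
the group element represented by the word built so far. -/
def eval (h : List G) : G := h.reverse.prod

/-- A move `m` is legal after history `h`: it is a letter of `S ∪ S⁻¹` and it is not
the inverse of the immediately preceding letter (no backtracking). -/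
def LegalMove (S : Set G) (h : List G) (m : G) : Prop :=
  m ∈ letters S ∧ ∀ p ∈ h.head?, m ≠ p⁻¹

/-- Appending `m` to the history `h` produces a word equal in `G` to some earlier
prefix of the word (equivalently, the walk in the Cayley graph revisits a vertex). -/
def ClosesCycle (h : List G) (m : G) : Prop :=
  ∃ t, t <:+ h ∧ eval t = eval (m :: h)

/-- A strategy: a choice of next letter given the history (most recent letter first). -/
abbrev Strategy (G : Type*) := List G → G

/-- The sequence of histories arising when the first player (moving at even steps)
uses `σ` and the second player (moving at odd steps) uses `τ`. -/
def hist (σ τ : Strategy G) : ℕ → List G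
  | 0 => []
  | k + 1 =>
      (if k % 2 = 0 then σ (hist σ τ k) else τ (hist σ τ k)) :: hist σ τ k

/-- The move made at step `k` in the play of `σ` against `τ`. -/
def moveAt (σ τ : Strategy G) (k : ℕ) : G :=
  if k % 2 = 0 then σ (hist σ τ k) else τ (hist σ τ k)

/-- Step `j` is uneventful: the move made is legal and does not close a cycle. -/
def Ok (S : Set G) (σ τ : Strategy G) (j : ℕ) : Prop :=
  LegalMove S (hist σ τ j) (moveAt σ τ j) ∧ ¬ ClosesCycle (hist σ τ j) (moveAt σ τ j)

/-- In the play of `σ` against `τ`, the player moving at steps congruent to `p` mod 2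
wins the relator achievement game `REL(G,S)`: at the first eventful step, either it is
that player's turn and they legally close a cycle, or it is the opponent's turn and the
opponent has made an illegal move (in particular, has no legal move). -/
def RelWins (S : Set G) (p : ℕ) (σ τ : Strategy G) : Prop :=
  ∃ k : ℕ, (∀ j < k, Ok S σ τ j) ∧
    ((k % 2 = p ∧ LegalMove S (hist σ τ k) (moveAt σ τ k) ∧
        ClosesCycle (hist σ τ k) (moveAt σ τ k)) ∨
      (k % 2 ≠ p ∧ ¬ LegalMove S (hist σ τ k) (moveAt σ τ k)))

/-- In the play of `σ` against `τ`, the player moving at steps congruent to `p` mod 2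
wins the relator avoidance game `RAV(G,S)`: at the first eventful step it is the
opponent's turn, and the opponent either makes an illegal move (in particular, has no
legal move) or closes a cycle. -/
def RavWins (S : Set G) (p : ℕ) (σ τ : Strategy G) : Prop :=
  ∃ k : ℕ, (∀ j < k, Ok S σ τ j) ∧ k % 2 ≠ p ∧
    (¬ LegalMove S (hist σ τ k) (moveAt σ τ k) ∨ ClosesCycle (hist σ τ k) (moveAt σ τ k))

/-- Player 1 has a winning strategy for `REL(G,S)`. -/
def FirstWinsREL (S : Set G) : Prop :=
  ∃ σ : Strategy G, ∀ τ : Strategy G, RelWins S 0 σ τ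

/-- Player 2 has a winning strategy for `REL(G,S)`. -/
def SecondWinsREL (S : Set G) : Prop :=
  ∃ τ : Strategy G, ∀ σ : Strategy G, RelWins S 1 σ τ

/-- Player 1 has a winning strategy for `RAV(G,S)`. -/
def FirstWinsRAV (S : Set G) : Prop :=
  ∃ σ : Strategy G, ∀ τ : Strategy G, RavWins S 0 σ τ

/-- Player 2 has a winning strategy for `RAV(G,S)`. -/
def SecondWinsRAV (S : Set G) : Prop :=
  ∃ τ : Strategy G, ∀ σ : Strategy G, RavWins S 1 σ τ

end RelatorGames

namespace RelDicProof

open RelatorGames QuaternionGroup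

variable {n : ℕ}

/-- The generating set from the theorem. -/
def Sgen (n : ℕ) : Set (QuaternionGroup n) :=
  {QuaternionGroup.a 1, (QuaternionGroup.xa 0)⁻¹,
    QuaternionGroup.a 1 * (QuaternionGroup.xa 0)⁻¹}

lemma a_inv (i : ZMod (2 * n)) : (a i : QuaternionGroup n)⁻¹ = a (-i) := by
  apply inv_eq_of_mul_eq_one_right
  rw [a_mul_a, add_neg_cancel, one_def]

lemma two_n_cast : ((n : ZMod (2 * n)) + n) = 0 := by
  rw [← Nat.cast_add, show n + n = 2 * n by ring, ZMod.natCast_self]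

lemma xa_inv (i : ZMod (2 * n)) : (xa i : QuaternionGroup n)⁻¹ = xa ((n : ZMod (2 * n)) + i) := by
  apply inv_eq_of_mul_eq_one_right
  rw [xa_mul_xa, one_def]
  congr 1
  linear_combination (two_n_cast (n := n))

/-- Mirror map: Player 2's response to each letter. -/
def phi : QuaternionGroup n → QuaternionGroup n
  | .a i => .a i
  | .xa i => .xa (-1 - i)

/-- Player 2's strategy: mirror the last letter played. -/
def tau : Strategy (QuaternionGroup n)
  | [] => 1
  | g :: _ => phi g

lemma mem_letters {g : QuaternionGroup n} :
    g ∈ letters (Sgen n) ↔ g = a 1 ∨ g = a (-1) ∨ g = xa (n : ZMod (2 * n)) ∨ g = xa 0 ∨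
      g = xa ((n : ZMod (2 * n)) - 1) ∨ g = xa (-1) := by
  have e1 : (xa (0 : ZMod (2 * n)))⁻¹ = xa (n : ZMod (2 * n)) := by rw [xa_inv, add_zero]
  have e2 : (a 1 : QuaternionGroup n) * xa (n : ZMod (2 * n)) = xa ((n : ZMod (2 * n)) - 1) := by
    rw [a_mul_xa]
  have e3 : (a (1 : ZMod (2 * n)) : QuaternionGroup n)⁻¹ = a (-1) := a_inv 1
  have e4 : (xa ((n : ZMod (2 * n)) : ZMod (2 * n)) : QuaternionGroup n)⁻¹ = xa 0 := by
    rw [xa_inv]; congr 1; exact two_n_cast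
  have e5 : (xa ((n : ZMod (2 * n)) - 1) : QuaternionGroup n)⁻¹ = xa (-1) := by
    rw [xa_inv]; congr 1; linear_combination (two_n_cast (n := n))
  constructor
  · rintro (h | h)
    · rcases h with h | h | h
      · exact Or.inl h
      · rw [h, e1]; tauto
      · rw [Set.mem_singleton_iff] at h; rw [h, e1, e2]; tauto
    · obtain ⟨x, hx, rfl⟩ := h
      rcases hx with h | h | h
      · subst h
        refine Or.inr (Or.inl ?_)
        show (a (1 : ZMod (2 * n)) : QuaternionGroup n)⁻¹ = a (-1)
        exact e3
      · subst h
        refine Or.inr (Or.inr (Or.inr (Or.inl ?_)))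
        show ((xa (0 : ZMod (2 * n)) : QuaternionGroup n)⁻¹)⁻¹ = xa 0
        rw [e1]; exact e4
      · rw [Set.mem_singleton_iff] at h
        subst h
        refine Or.inr (Or.inr (Or.inr (Or.inr (Or.inr ?_))))
        show ((a 1 * (xa (0 : ZMod (2 * n)) : QuaternionGroup n)⁻¹))⁻¹ = xa (-1)
        rw [e1, e2]; exact e5
  · rintro (rfl | rfl | rfl | rfl | rfl | rfl)
    · exact Or.inl (Or.inl rfl)
    · exact Or.inr ⟨a 1, Or.inl rfl, e3⟩
    · rw [← e1]; exact Or.inl (Or.inr (Or.inl rfl))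
    · exact Or.inr ⟨xa (n : ZMod (2 * n)), by rw [← e1]; exact Or.inr (Or.inl rfl), e4⟩
    · rw [← e2, ← e1]; exact Or.inl (Or.inr (Or.inr rfl))
    · exact Or.inr ⟨xa ((n : ZMod (2 * n)) - 1), by rw [← e2, ← e1]; exact Or.inr (Or.inr rfl), e5⟩

/-- Parity homomorphism. -/
def pr : ZMod (2 * n) →+* ZMod 2 := ZMod.castHom (dvd_mul_right 2 n) (ZMod 2)

lemma pr_n (hodd : Odd n) : pr ((n : ℕ) : ZMod (2 * n)) = 1 := by
  rw [map_natCast]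
  obtain ⟨k, rfl⟩ := hodd
  push_cast
  rw [show ((2 : ZMod 2)) = 0 by decide]
  ring

lemma eval_cons (m : QuaternionGroup n) (h : List (QuaternionGroup n)) :
    eval (m :: h) = eval h * m := by
  simp [eval]

lemma hist_succ (σ τ : Strategy (QuaternionGroup n)) (k : ℕ) :
    hist σ τ (k + 1) = moveAt σ τ k :: hist σ τ k := rfl

lemma hist_suffix (σ τ : Strategy (QuaternionGroup n)) {i j : ℕ} (hij : i ≤ j) :
    hist σ τ i <:+ hist σ τ j := by
  induction j with
  | zero => simp_all
  | succ j ih =>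
    rcases Nat.lt_or_ge i (j + 1) with h | h
    · exact (ih (by omega)).trans (by rw [hist_succ]; exact List.suffix_cons _ _)
    · have : i = j + 1 := by omega
      subst this; exact List.suffix_rfl

lemma suffix_hist (σ τ : Strategy (QuaternionGroup n)) {t : List (QuaternionGroup n)} {k : ℕ}
    (h : t <:+ hist σ τ k) : ∃ j ≤ k, t = hist σ τ j := by
  induction k with
  | zero => exact ⟨0, le_rfl, List.suffix_nil.mp h⟩
  | succ k ih =>
    rw [hist_succ] at h
    rcases List.suffix_cons_iff.mp h with h | h
    · exact ⟨k + 1, le_rfl, by rw [hist_succ, h]⟩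
    · obtain ⟨j, hj, rfl⟩ := ih h
      exact ⟨j, by omega, rfl⟩

lemma P_ne {S : Set (QuaternionGroup n)} {σ τ : Strategy (QuaternionGroup n)} {k : ℕ}
    (H : ∀ j < k, Ok S σ τ j) {i j : ℕ} (hij : i < j) (hjk : j ≤ k) :
    eval (hist σ τ i) ≠ eval (hist σ τ j) := by
  obtain ⟨j', rfl⟩ : ∃ j', j = j' + 1 := ⟨j - 1, by omega⟩
  have hok := H j' (by omega)
  intro he
  exact hok.2 ⟨hist σ τ i, hist_suffix σ τ (by omega), by rw [← hist_succ]; exact he⟩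

end RelDicProof
namespace RelDicProof
open RelatorGames QuaternionGroup

variable {n : ℕ}

lemma moveAt_odd (σ : Strategy (QuaternionGroup n)) (s : ℕ) :
    moveAt σ tau (2 * s + 1) = phi (moveAt σ tau (2 * s)) := by
  rw [moveAt, if_neg (by omega)]
  rfl

lemma posEven (hodd : Odd n) (σ : Strategy (QuaternionGroup n)) (t : ℕ)
    (H : ∀ j < 2 * t, Ok (Sgen n) σ tau j) :
    ∃ e : ZMod (2 * n), eval (hist σ tau (2 * t)) = a e ∧ pr e = 0 := by
  induction t with
  | zero => exact ⟨0, by rw [show 2*0 = 0 by ring]; simp only [hist, eval, List.reverse_nil, List.prod_nil]; exact one_def, map_zero _⟩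
  | succ t ih =>
    obtain ⟨e, hP, hpr⟩ := ih (fun j hj => H j (by omega))
    have hok := H (2 * t) (by omega)
    have hmL := mem_letters.mp hok.1.1
    have h3 : hist σ tau (2 * (t + 1)) =
        phi (moveAt σ tau (2 * t)) :: moveAt σ tau (2 * t) :: hist σ tau (2 * t) := by
      rw [show 2 * (t + 1) = (2 * t + 1) + 1 by ring, hist_succ, moveAt_odd, hist_succ]
    rw [h3, eval_cons, eval_cons, hP]
    rcases hmL with hm | hm | hm | hm | hm | hm <;> rw [hm]
    · exact ⟨e + 1 + 1, by simp [phi], by simp [map_add, map_one, hpr]; try decide⟩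
    · exact ⟨e + -1 + -1, by simp [phi], by simp [map_add, map_neg, map_one, hpr]; try decide⟩
    · refine ⟨(n : ZMod (2 * n)) + (-1 - (n : ZMod (2*n))) - ((n : ZMod (2*n)) - e), ?_, ?_⟩
      · simp [phi, a_mul_xa, xa_mul_xa]
      · simp [map_add, map_sub, map_neg, map_one, hpr, pr_n hodd]; try decide
    · refine ⟨(n : ZMod (2 * n)) + (-1 - 0) - (0 - e), ?_, ?_⟩
      · simp [phi, a_mul_xa, xa_mul_xa]
      · simp [map_add, map_sub, map_neg, map_one, map_zero, hpr, pr_n hodd]; try decide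
    · refine ⟨(n : ZMod (2 * n)) + (-1 - ((n : ZMod (2*n)) - 1)) - ((n : ZMod (2*n)) - 1 - e), ?_, ?_⟩
      · simp [phi, a_mul_xa, xa_mul_xa]
      · simp [map_add, map_sub, map_neg, map_one, hpr, pr_n hodd]; try decide
    · refine ⟨(n : ZMod (2 * n)) + (-1 - (-1)) - (-1 - e), ?_, ?_⟩
      · simp [phi, a_mul_xa, xa_mul_xa]
      · simp [map_add, map_sub, map_neg, map_one, hpr, pr_n hodd]; try decide

end RelDicProof
namespace RelDicProof
open RelatorGames QuaternionGroup

variable {n : ℕ}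

lemma phi_a (i : ZMod (2 * n)) : phi (a i : QuaternionGroup n) = a i := rfl
lemma phi_xa (i : ZMod (2 * n)) : phi (xa i : QuaternionGroup n) = xa (-1 - i) := rfl

lemma claim (hodd : Odd n) (σ : Strategy (QuaternionGroup n)) (t : ℕ)
    (H : ∀ j < 2 * t, Ok (Sgen n) σ tau j) (m : QuaternionGroup n)
    (hm : LegalMove (Sgen n) (hist σ tau (2 * t)) m) :
    ¬ ClosesCycle (hist σ tau (2 * t)) m := by
  rintro ⟨t', hsuf, heq⟩
  obtain ⟨j, hj, rfl⟩ := suffix_hist σ tau hsuf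
  obtain ⟨e, hP, hpr⟩ := posEven hodd σ t H
  rw [eval_cons, hP] at heq
  have hmL := mem_letters.mp hm.1
  rcases Nat.even_or_odd j with ⟨s, hs⟩ | ⟨s, hs⟩
  · -- j even
    have hs2 : j = 2 * s := by omega
    subst hs2
    obtain ⟨es, hPs, hprs⟩ := posEven hodd σ s (fun j' hj' => H j' (by omega))
    rw [hPs] at heq
    rcases hmL with rfl | rfl | rfl | rfl | rfl | rfl
    · rw [a_mul_a] at heq
      exact absurd (congrArg pr (a.inj heq))
        (by simp only [map_add, map_one, hpr, hprs]; decide)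
    · rw [a_mul_a] at heq
      exact absurd (congrArg pr (a.inj heq))
        (by simp only [map_add, map_neg, map_one, hpr, hprs]; decide)
    · rw [a_mul_xa] at heq; cases heq
    · rw [a_mul_xa] at heq; cases heq
    · rw [a_mul_xa] at heq; cases heq
    · rw [a_mul_xa] at heq; cases heq
  · -- j odd
    subst hs
    have hst : s < t := by omega
    have hok := H (2 * s) (by omega)
    have hmL' := mem_letters.mp hok.1.1
    obtain ⟨es, hPs, hprs⟩ := posEven hodd σ s (fun j' hj' => H j' (by omega))
    rw [hist_succ, eval_cons, hPs] at heq
    rcases hmL with rfl | rfl | rfl | rfl | rfl | rfl <;>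
      rcases hmL' with hm' | hm' | hm' | hm' | hm' | hm' <;> rw [hm'] at heq
    -- m = a 1
    · simp only [a_mul_a, a.injEq] at heq
      exact P_ne H (show 2*s < 2*t by omega) le_rfl
        (by rw [hPs, hP]; exact congrArg a (by linear_combination heq))
    · simp only [a_mul_a, a.injEq] at heq
      have hT2 : eval (hist σ tau (2*s+1+1)) = a e := by
        rw [hist_succ, eval_cons, moveAt_odd, hist_succ, eval_cons, hPs, hm']
        simp only [phi_a, a_mul_a]
        exact congrArg a (by linear_combination heq)
      rcases (show 2*s+1+1 ≤ 2*t by omega).lt_or_eq with hlt | heqt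
      · exact P_ne H hlt le_rfl (hT2.trans hP.symm)
      · refine hm.2 (phi (moveAt σ tau (2*s))) ?_ ?_
        · rw [← heqt, hist_succ, moveAt_odd]; simp
        · rw [hm', phi_a, a_inv]; try exact congrArg a (by ring)
    · simp only [a_mul_a, a_mul_xa] at heq; cases heq
    · simp only [a_mul_a, a_mul_xa] at heq; cases heq
    · simp only [a_mul_a, a_mul_xa] at heq; cases heq
    · simp only [a_mul_a, a_mul_xa] at heq; cases heq
    -- m = a (-1)
    · simp only [a_mul_a, a.injEq] at heq
      have hT2 : eval (hist σ tau (2*s+1+1)) = a e := by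
        rw [hist_succ, eval_cons, moveAt_odd, hist_succ, eval_cons, hPs, hm']
        simp only [phi_a, a_mul_a]
        exact congrArg a (by linear_combination heq)
      rcases (show 2*s+1+1 ≤ 2*t by omega).lt_or_eq with hlt | heqt
      · exact P_ne H hlt le_rfl (hT2.trans hP.symm)
      · refine hm.2 (phi (moveAt σ tau (2*s))) ?_ ?_
        · rw [← heqt, hist_succ, moveAt_odd]; simp
        · rw [hm', phi_a, a_inv]; try exact congrArg a (by ring)
    · simp only [a_mul_a, a.injEq] at heq
      exact P_ne H (show 2*s < 2*t by omega) le_rfl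
        (by rw [hPs, hP]; exact congrArg a (by linear_combination heq))
    · simp only [a_mul_a, a_mul_xa] at heq; cases heq
    · simp only [a_mul_a, a_mul_xa] at heq; cases heq
    · simp only [a_mul_a, a_mul_xa] at heq; cases heq
    · simp only [a_mul_a, a_mul_xa] at heq; cases heq
    -- m = xa n
    · simp only [a_mul_a, a_mul_xa] at heq; cases heq
    · simp only [a_mul_a, a_mul_xa] at heq; cases heq
    · simp only [a_mul_xa, xa.injEq] at heq
      exact P_ne H (show 2*s < 2*t by omega) le_rfl
        (by rw [hPs, hP]; exact congrArg a (by linear_combination -heq))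
    · simp only [a_mul_xa, xa.injEq] at heq
      exact absurd (congrArg pr heq)
        (by simp only [map_add, map_sub, map_neg, map_one, map_zero, hpr, hprs, pr_n hodd]; decide)
    · simp only [a_mul_xa, xa.injEq] at heq
      exact absurd (congrArg pr heq)
        (by simp only [map_add, map_sub, map_neg, map_one, map_zero, hpr, hprs, pr_n hodd]; decide)
    · simp only [a_mul_xa, xa.injEq] at heq
      have hT2 : eval (hist σ tau (2*s+1+1)) = a e := by
        rw [hist_succ, eval_cons, moveAt_odd, hist_succ, eval_cons, hPs, hm']
        simp only [phi_xa, a_mul_xa, xa_mul_xa]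
        exact congrArg a (by linear_combination -heq)
      rcases (show 2*s+1+1 ≤ 2*t by omega).lt_or_eq with hlt | heqt
      · exact P_ne H hlt le_rfl (hT2.trans hP.symm)
      · refine hm.2 (phi (moveAt σ tau (2*s))) ?_ ?_
        · rw [← heqt, hist_succ, moveAt_odd]; simp
        · rw [hm', phi_xa, xa_inv]; try exact congrArg xa (by ring)
    -- m = xa 0
    · simp only [a_mul_a, a_mul_xa] at heq; cases heq
    · simp only [a_mul_a, a_mul_xa] at heq; cases heq
    · simp only [a_mul_xa, xa.injEq] at heq
      exact absurd (congrArg pr heq)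
        (by simp only [map_add, map_sub, map_neg, map_one, map_zero, hpr, hprs, pr_n hodd]; decide)
    · simp only [a_mul_xa, xa.injEq] at heq
      exact P_ne H (show 2*s < 2*t by omega) le_rfl
        (by rw [hPs, hP]; exact congrArg a (by linear_combination -heq))
    · simp only [a_mul_xa, xa.injEq] at heq
      have hT2 : eval (hist σ tau (2*s+1+1)) = a e := by
        rw [hist_succ, eval_cons, moveAt_odd, hist_succ, eval_cons, hPs, hm']
        simp only [phi_xa, a_mul_xa, xa_mul_xa]
        exact congrArg a (by linear_combination -heq)
      rcases (show 2*s+1+1 ≤ 2*t by omega).lt_or_eq with hlt | heqt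
      · exact P_ne H hlt le_rfl (hT2.trans hP.symm)
      · refine hm.2 (phi (moveAt σ tau (2*s))) ?_ ?_
        · rw [← heqt, hist_succ, moveAt_odd]; simp
        · rw [hm', phi_xa, xa_inv]; try exact congrArg xa (by ring)
    · simp only [a_mul_xa, xa.injEq] at heq
      exact absurd (congrArg pr heq)
        (by simp only [map_add, map_sub, map_neg, map_one, map_zero, hpr, hprs, pr_n hodd]; decide)
    -- m = xa (n - 1)
    · simp only [a_mul_a, a_mul_xa] at heq; cases heq
    · simp only [a_mul_a, a_mul_xa] at heq; cases heq
    · simp only [a_mul_xa, xa.injEq] at heq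
      exact absurd (congrArg pr heq)
        (by simp only [map_add, map_sub, map_neg, map_one, map_zero, hpr, hprs, pr_n hodd]; decide)
    · simp only [a_mul_xa, xa.injEq] at heq
      have hT2 : eval (hist σ tau (2*s+1+1)) = a e := by
        rw [hist_succ, eval_cons, moveAt_odd, hist_succ, eval_cons, hPs, hm']
        simp only [phi_xa, a_mul_xa, xa_mul_xa]
        exact congrArg a (by linear_combination -heq)
      rcases (show 2*s+1+1 ≤ 2*t by omega).lt_or_eq with hlt | heqt
      · exact P_ne H hlt le_rfl (hT2.trans hP.symm)
      · refine hm.2 (phi (moveAt σ tau (2*s))) ?_ ?_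
        · rw [← heqt, hist_succ, moveAt_odd]; simp
        · rw [hm', phi_xa, xa_inv]; try exact congrArg xa (by ring)
    · simp only [a_mul_xa, xa.injEq] at heq
      exact P_ne H (show 2*s < 2*t by omega) le_rfl
        (by rw [hPs, hP]; exact congrArg a (by linear_combination -heq))
    · simp only [a_mul_xa, xa.injEq] at heq
      exact absurd (congrArg pr heq)
        (by simp only [map_add, map_sub, map_neg, map_one, map_zero, hpr, hprs, pr_n hodd]; decide)
    -- m = xa (-1)
    · simp only [a_mul_a, a_mul_xa] at heq; cases heq
    · simp only [a_mul_a, a_mul_xa] at heq; cases heq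
    · simp only [a_mul_xa, xa.injEq] at heq
      have hT2 : eval (hist σ tau (2*s+1+1)) = a e := by
        rw [hist_succ, eval_cons, moveAt_odd, hist_succ, eval_cons, hPs, hm']
        simp only [phi_xa, a_mul_xa, xa_mul_xa]
        exact congrArg a (by linear_combination -heq)
      rcases (show 2*s+1+1 ≤ 2*t by omega).lt_or_eq with hlt | heqt
      · exact P_ne H hlt le_rfl (hT2.trans hP.symm)
      · refine hm.2 (phi (moveAt σ tau (2*s))) ?_ ?_
        · rw [← heqt, hist_succ, moveAt_odd]; simp
        · rw [hm', phi_xa, xa_inv]; try exact congrArg xa (by ring)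
    · simp only [a_mul_xa, xa.injEq] at heq
      exact absurd (congrArg pr heq)
        (by simp only [map_add, map_sub, map_neg, map_one, map_zero, hpr, hprs, pr_n hodd]; decide)
    · simp only [a_mul_xa, xa.injEq] at heq
      exact absurd (congrArg pr heq)
        (by simp only [map_add, map_sub, map_neg, map_one, map_zero, hpr, hprs, pr_n hodd]; decide)
    · simp only [a_mul_xa, xa.injEq] at heq
      exact P_ne H (show 2*s < 2*t by omega) le_rfl
        (by rw [hPs, hP]; exact congrArg a (by linear_combination -heq))

end RelDicProof
namespace RelDicProof
open RelatorGames QuaternionGroup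

variable {n : ℕ}

lemma exists_not_ok (hn : 3 ≤ n) (σ : Strategy (QuaternionGroup n)) :
    ∃ k, ¬ Ok (Sgen n) σ tau k := by
  by_contra h
  push_neg at h
  haveI : NeZero n := ⟨by omega⟩
  obtain ⟨i, j, hne, hij⟩ :=
    Finite.exists_ne_map_eq_of_infinite (fun k : ℕ => eval (hist σ tau k))
  rcases Nat.lt_trichotomy i j with hlt | heq | hgt
  · exact P_ne (k := j) (fun j' _ => h j') hlt le_rfl hij
  · exact hne heq
  · exact P_ne (k := i) (fun j' _ => h j') hgt le_rfl hij.symm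

lemma cast_ne (hn : 3 ≤ n) {a b : ℕ} (ha : a < 2 * n) (hb : b < 2 * n) (hab : a ≠ b) :
    (a : ZMod (2 * n)) ≠ (b : ZMod (2 * n)) := by
  haveI : NeZero (2 * n) := ⟨by omega⟩
  intro h
  apply hab
  have := congrArg ZMod.val h
  rwa [ZMod.val_cast_of_lt ha, ZMod.val_cast_of_lt hb] at this

lemma neg_one_cast (hn : 3 ≤ n) : ((2 * n - 1 : ℕ) : ZMod (2 * n)) = -1 := by
  have h0 : ((2 * n : ℕ) : ZMod (2 * n)) = 0 := ZMod.natCast_self _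
  rw [Nat.cast_sub (by omega : 1 ≤ 2 * n)] at *
  rw [h0]
  push_cast
  ring

lemma one_ne_neg_one (hn : 3 ≤ n) : (1 : ZMod (2 * n)) ≠ -1 := by
  rw [← neg_one_cast hn, show (1 : ZMod (2*n)) = ((1 : ℕ) : ZMod (2*n)) by push_cast; ring]
  exact cast_ne hn (by omega) (by omega) (by omega)

lemma n_ne_one (hn : 3 ≤ n) : ((n : ℕ) : ZMod (2 * n)) ≠ 1 := by
  rw [show (1 : ZMod (2*n)) = ((1 : ℕ) : ZMod (2*n)) by push_cast; ring]
  exact cast_ne hn (by omega) (by omega) (by omega)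

lemma n_ne_neg_one (hn : 3 ≤ n) : ((n : ℕ) : ZMod (2 * n)) ≠ -1 := by
  rw [← neg_one_cast hn]
  exact cast_ne hn (by omega) (by omega) (by omega)

lemma tau_legal (hn : 3 ≤ n) (σ : Strategy (QuaternionGroup n)) (s : ℕ)
    (hok : Ok (Sgen n) σ tau (2 * s)) :
    LegalMove (Sgen n) (hist σ tau (2 * s + 1)) (moveAt σ tau (2 * s + 1)) := by
  have hmL := mem_letters.mp hok.1.1
  rw [moveAt_odd]
  constructor
  · rw [mem_letters]
    rcases hmL with hm' | hm' | hm' | hm' | hm' | hm' <;> rw [hm']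
    · exact Or.inl (by rw [phi_a])
    · exact Or.inr (Or.inl (by rw [phi_a]))
    · refine Or.inr (Or.inr (Or.inr (Or.inr (Or.inl ?_))))
      rw [phi_xa]
      exact congrArg xa (by linear_combination -(two_n_cast (n := n)))
    · refine Or.inr (Or.inr (Or.inr (Or.inr (Or.inr ?_))))
      rw [phi_xa]
      exact congrArg xa (by ring)
    · refine Or.inr (Or.inr (Or.inl ?_))
      rw [phi_xa]
      exact congrArg xa (by linear_combination -(two_n_cast (n := n)))
    · refine Or.inr (Or.inr (Or.inr (Or.inl ?_)))
      rw [phi_xa]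
      exact congrArg xa (by ring)
  · intro p hp
    have hp2 : p = moveAt σ tau (2 * s) := by
      rw [hist_succ] at hp
      simp only [List.head?_cons, Option.mem_def, Option.some.injEq] at hp
      exact hp.symm
    subst hp2
    rcases hmL with hm' | hm' | hm' | hm' | hm' | hm' <;> rw [hm']
    · rw [phi_a, a_inv]
      intro hc
      exact one_ne_neg_one hn (a.inj hc)
    · rw [phi_a, a_inv]
      intro hc
      exact one_ne_neg_one hn (by linear_combination -(a.inj hc))
    · rw [phi_xa, xa_inv]
      intro hc
      apply n_ne_neg_one hn
      linear_combination -(xa.inj hc) - (two_n_cast (n := n))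
    · rw [phi_xa, xa_inv]
      intro hc
      exact n_ne_neg_one hn (by linear_combination -(xa.inj hc))
    · rw [phi_xa, xa_inv]
      intro hc
      apply n_ne_one hn
      linear_combination -(xa.inj hc) - (two_n_cast (n := n))
    · rw [phi_xa, xa_inv]
      intro hc
      apply n_ne_one hn
      linear_combination -(xa.inj hc)

theorem main (hn : 3 ≤ n) (hodd : Odd n) : SecondWinsREL (Sgen n) := by
  classical
  refine ⟨tau, fun σ => ?_⟩
  have hex := exists_not_ok hn σ
  have hk := Nat.find_spec hex
  have hmin : ∀ j < Nat.find hex, Ok (Sgen n) σ tau j :=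
    fun j hj => not_not.mp (Nat.find_min hex hj)
  refine ⟨Nat.find hex, hmin, ?_⟩
  rcases Nat.even_or_odd (Nat.find hex) with ⟨t, ht⟩ | ⟨t, ht⟩
  · -- P1's move is illegal
    right
    have ht2 : Nat.find hex = 2 * t := by omega
    constructor
    · omega
    · intro hleg
      rw [ht2] at hleg hk
      exact hk ⟨hleg, claim hodd σ t (fun j hj => hmin j (by omega)) _ hleg⟩
  · -- P2 closes a cycle
    left
    refine ⟨by omega, ?_⟩
    rw [ht]
    have hok := hmin (2 * t) (by omega)
    have hleg := tau_legal hn σ t hok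
    refine ⟨hleg, ?_⟩
    by_contra hnc
    rw [ht] at hk
    exact hk ⟨hleg, hnc⟩

end RelDicProof

open RelatorGames in
/-- For odd `n ≥ 3`, Player 2 has a winning strategy for
`REL(Dic_n, {a,b,c})` with the triangle presentation (`b = x⁻¹`, `c = a x⁻¹`). -/
theorem rel_dicyclic_odd_three_generators_second_wins (n : ℕ) (hn : 3 ≤ n)
    (hodd : Odd n) :
    SecondWinsREL
      ({QuaternionGroup.a 1, (QuaternionGroup.xa 0)⁻¹,
          QuaternionGroup.a 1 * (QuaternionGroup.xa 0)⁻¹} : Set (QuaternionGroup n)) :=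
  RelDicProof.main hn hodd
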